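/- Let b, b' be residue functions (functions U → Z_{≥0} recording box-residue multiplicities of bipartitions) with b' dominant (α_u^∨(b') ≥ 0 for all u) and b'(u) ≥ b(u) for all u. If a subcrystal C of the crystal of all bipartitions contains a bipartition λ with b_λ = b, then C contains a bipartition μ with b_μ = b' whose Young diagram contains that of λ. -/

import Mathlib

/-! STATEMENT 17: Let `b, b'` be residue functions with `b'` dominant and `b'(u) ≥ b(u)`
for all `u`.  If a subcrystal `C` of the crystal of all bipartitions contains a
bipartition `λ` with `b_λ = b`, then `C` contains a bipartition `μ` with `b_μ = b'`
whose Young diagram contains that of `λ`.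

We axiomatize: bipartitions form a type `Bip` with a diagram-containment preorder and a
residue function `bfun : Bip → (k →₀ ℕ)` supported on `U = Q q^ℤ ∪ -q^ℤ`;
`α_u^∨(b) = b(qu) + b(q⁻¹u) - 2 b(u) + δ_{u,-1} + δ_{u,Q}` counts addable minus removable
boxes of residue `u`; and the Kashiwara operator `f̃_u` (closure of the subcrystal under
which is `hstep`) adds one box of residue `u` whenever `α_u^∨(b_λ) > 0`. -/

set_option linter.unusedVariables false


def alphaVee {k : Type*} [Field k] [DecidableEq k] (Q : k) (q : kˣ)
    (b : k →₀ ℕ) (u : k) : ℤ :=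
  (b ((q : k) * u) : ℤ) + (b (((q⁻¹ : kˣ) : k) * u) : ℤ) - 2 * (b u : ℤ)
    + (if u = -1 then 1 else 0) + (if u = Q then 1 else 0)

lemma tot_lt {k : Type*} [DecidableEq k] (b b' : k →₀ ℕ) (hge : ∀ u, b u ≤ b' u)
    (u : k) (hu : b u < b' u) :
    (b.sum fun _ n => n) < b'.sum fun _ n => n := by
  classical
  have hb : (b.sum fun _ n => n) = ∑ v ∈ b.support ∪ b'.support, b v :=
    Finsupp.sum_of_support_subset b Finset.subset_union_left _ (fun _ _ => rfl)
  have hb' : (b'.sum fun _ n => n) = ∑ v ∈ b.support ∪ b'.support, b' v :=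
    Finsupp.sum_of_support_subset b' Finset.subset_union_right _ (fun _ _ => rfl)
  rw [hb, hb']
  exact Finset.sum_lt_sum (fun v _ => hge v)
    ⟨u, Finset.mem_union_right _ (Finsupp.mem_support_iff.mpr (by omega)), hu⟩

lemma key {k : Type*} [Field k] [DecidableEq k] (Q : k) (q : kˣ)
    (U : Set k) (hU : U = {x : k | ∃ m : ℤ, x = Q * ((q ^ m : kˣ) : k) ∨
      x = -((q ^ m : kˣ) : k)})
    (b b' : k →₀ ℕ) (hb'supp : ↑b'.support ⊆ U)
    (hdom : ∀ u : k, 0 ≤ alphaVee Q q b' u)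
    (hge : ∀ u, b u ≤ b' u)
    (hne : ∃ u, b u < b' u) :
    ∃ u ∈ U, b u < b' u ∧ 0 < alphaVee Q q b u := by
  classical
  by_contra hcon
  push_neg at hcon
  have hmemU : ∀ u : k, b u < b' u → u ∈ U := fun u h =>
    hb'supp (Finsupp.mem_support_iff.mpr (by omega))
  have H : ∀ u : k, b u < b' u → alphaVee Q q b u ≤ 0 := fun u h =>
    hcon u (hmemU u h) h
  set M : ℕ := b'.support.sup (fun u => b' u - b u) with hM
  obtain ⟨u1, hu1⟩ := hne
  have hu1s : u1 ∈ b'.support := Finsupp.mem_support_iff.mpr (by omega)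
  have hMpos : 0 < M := by
    have h1 : b' u1 - b u1 ≤ M := Finset.le_sup (f := fun u => b' u - b u) hu1s
    omega
  have hMle : ∀ v, b' v - b v ≤ M := by
    intro v
    by_cases hv : v ∈ b'.support
    · exact Finset.le_sup (f := fun u => b' u - b u) hv
    · have h0 : b' v = 0 := Finsupp.notMem_support_iff.mp hv
      omega
  obtain ⟨u0, hu0s, hu0⟩ := Finset.exists_mem_eq_sup b'.support ⟨u1, hu1s⟩
    (fun u => b' u - b u)
  have hdu0 : b' u0 - b u0 = M := hu0.symm
  have step : ∀ v, b' v - b v = M →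
      (b' ((q:k) * v) - b ((q:k) * v) = M) ∧
      (b' (((q⁻¹:kˣ):k) * v) - b (((q⁻¹:kˣ):k) * v) = M) ∧
      alphaVee Q q b v = 0 := by
    intro v hv
    have gv := hge v
    have hvlt : b v < b' v := by omega
    have h1 := H v hvlt
    have h2 := hdom v
    have e1 := hge ((q:k) * v); have e2 := hge (((q⁻¹:kˣ):k) * v)
    have f1 := hMle ((q:k) * v); have f2 := hMle (((q⁻¹:kˣ):k) * v)
    unfold alphaVee at h1 h2 ⊢
    split_ifs at h1 h2 ⊢ <;> omega
  set f : ℤ → k := fun m => ((q ^ m : kˣ) : k) * u0 with hf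
  have hfsucc : ∀ m : ℤ, (q:k) * f m = f (m + 1) := by
    intro m
    simp only [hf, zpow_add_one, Units.val_mul]
    ring
  have hfpred : ∀ m : ℤ, ((q⁻¹:kˣ):k) * f m = f (m - 1) := by
    intro m
    simp only [hf, zpow_sub_one, Units.val_mul]
    ring
  have hfM : ∀ m : ℤ, b' (f m) - b (f m) = M := by
    intro m
    induction m using Int.induction_on with
    | zero => simpa [hf] using hdu0
    | succ i ih => rw [← hfsucc]; exact (step _ ih).1
    | pred i ih =>
        have : (-(i:ℤ) - 1) = (-(i:ℤ)) - 1 := rfl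
        rw [this, ← hfpred]
        exact (step _ ih).2.1
  have hfalpha : ∀ m : ℤ, alphaVee Q q b (f m) = 0 := fun m => (step _ (hfM m)).2.2
  have hfmem : ∀ m : ℤ, b (f m) < b' (f m) := by
    intro m; have h1 := hfM m; have h2 := hge (f m); omega
  by_cases hu0z : u0 = 0
  · have h0 := hfalpha 0
    have hf0 : f 0 = u0 := by simp [hf]
    rw [hf0, hu0z] at h0
    have hlt0 : b (0:k) < b' (0:k) := by
      have := hfmem 0; rwa [hf0, hu0z] at this
    have h0U : (0:k) ∈ U := hmemU 0 hlt0
    rw [hU] at h0U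
    obtain ⟨m, hm | hm⟩ := h0U
    · have hQ : Q = 0 := by
        rcases mul_eq_zero.mp hm.symm with h | h
        · exact h
        · exact absurd h (Units.ne_zero _)
      have hval : alphaVee Q q b 0 = 1 := by
        unfold alphaVee
        rw [mul_zero, mul_zero, hQ, if_pos rfl,
          if_neg (fun hcontra => one_ne_zero (α := k) (neg_eq_zero.mp hcontra.symm))]
        omega
      rw [hval] at h0
      exact one_ne_zero h0
    · have : ((q ^ m : kˣ) : k) = 0 := by
        have := hm.symm
        rwa [neg_eq_zero] at this
      exact absurd this (Units.ne_zero _)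
  · have hmaps : ∀ m ∈ Finset.range (b'.support.card + 1),
        f (m : ℤ) ∈ b'.support := by
      intro m _
      exact Finsupp.mem_support_iff.mpr (by have := hfmem (m : ℤ); omega)
    obtain ⟨a, ha, c, hc, hac, hfac⟩ :=
      Finset.exists_ne_map_eq_of_card_lt_of_maps_to (by simp) hmaps
    have hqq : (q ^ (a:ℤ) : kˣ) = q ^ (c:ℤ) :=
      Units.ext (mul_right_cancel₀ hu0z hfac)
    obtain ⟨n, hn, hqn⟩ : ∃ n : ℕ, 0 < n ∧ (q : kˣ) ^ (n:ℤ) = 1 := by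
      rcases hac.lt_or_gt with h | h
      · refine ⟨c - a, by omega, ?_⟩
        have : ((c - a : ℕ) : ℤ) = (c:ℤ) - a := by omega
        rw [this, zpow_sub, ← hqq]
        simp
      · refine ⟨a - c, by omega, ?_⟩
        have : ((a - c : ℕ) : ℤ) = (a:ℤ) - c := by omega
        rw [this, zpow_sub, hqq]
        simp
    have hper : ∀ m t : ℤ, f (m + n * t) = f m := by
      intro m t
      simp only [hf]
      rw [zpow_add, zpow_mul, hqn, one_zpow, mul_one]
    set g : ℕ → ℤ := fun m => (b (f m) : ℤ) with hg
    set h : ℕ → ℤ := fun m => (b (f ((m:ℤ) - 1)) : ℤ) with hh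
    set δ : ℕ → ℤ := fun m =>
      (if f m = -1 then (1:ℤ) else 0) + (if f m = Q then 1 else 0) with hδ
    have hterm : ∀ m : ℕ, alphaVee Q q b (f m)
        = (g (m+1) - g m) + (h m - h (m+1)) + δ m := by
      intro m
      have e1 : (q:k) * f m = f ((m+1 : ℕ) : ℤ) := by
        rw [hfsucc]; norm_num
      have e2 := hfpred (m : ℤ)
      have e3 : (((m+1:ℕ):ℤ) - 1) = (m : ℤ) := by push_cast; ring
      unfold alphaVee
      rw [e1, e2]
      simp only [hg, hh, hδ, e3]
      ring
    have hsum0 : ∑ m ∈ Finset.range n, alphaVee Q q b (f m) = 0 :=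
      Finset.sum_eq_zero fun m _ => hfalpha m
    have hgn : g n = g 0 := by
      have h1 : f ((n:ℕ) : ℤ) = f 0 := by have := hper 0 1; simpa using this
      simp only [hg, Nat.cast_zero, h1]
    have hhn : h 0 = h n := by
      have h1 : f ((n:ℤ) - 1) = f (-1) := by
        have e : ((n:ℤ) - 1) = -1 + (n:ℤ) * 1 := by ring
        rw [e, hper]
      have h2 : ((0:ℕ):ℤ) - 1 = (-1 : ℤ) := by norm_num
      simp only [hh, h1, h2]
    have hsumδ : ∑ m ∈ Finset.range n, δ m = 0 := by
      have e : ∑ m ∈ Finset.range n, alphaVee Q q b (f m)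
          = (∑ m ∈ Finset.range n, (g (m+1) - g m))
            + (∑ m ∈ Finset.range n, (h m - h (m+1)))
            + ∑ m ∈ Finset.range n, δ m := by
        rw [← Finset.sum_add_distrib, ← Finset.sum_add_distrib]
        exact Finset.sum_congr rfl fun m _ => hterm m
      rw [hsum0, Finset.sum_range_sub g, Finset.sum_range_sub' h, hgn, hhn] at e
      linarith
    have hδ0 : ∀ m ∈ Finset.range n, δ m = 0 := by
      refine (Finset.sum_eq_zero_iff_of_nonneg ?_).mp hsumδ
      intro m _
      simp only [hδ]
      split_ifs <;> norm_num
    have hu0U : u0 ∈ U := hmemU u0 (by have := hfmem 0; simpa [hf] using this)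
    rw [hU] at hu0U
    obtain ⟨j, hj | hj⟩ := hu0U
    · have hinv : ((q ^ (-j) : kˣ) : k) * ((q ^ j : kˣ) : k) = 1 := by
        rw [← Units.val_mul, ← zpow_add]
        simp
      have hfQ : f (-j) = Q := by
        calc f (-j) = Q * (((q ^ (-j) : kˣ) : k) * ((q ^ j : kˣ) : k)) := by
              simp only [hf, hj]; ring
          _ = Q := by rw [hinv, mul_one]
      set r : ℤ := (-j) % (n:ℤ) with hr
      have hr0 : 0 ≤ r := Int.emod_nonneg _ (by exact_mod_cast hn.ne')
      have hrn : r < n := Int.emod_lt_of_pos _ (by exact_mod_cast hn)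
      have hfr : f r = Q := by
        calc f r = f (r + (n:ℤ) * ((-j) / (n:ℤ))) := (hper r _).symm
          _ = f (-j) := by rw [hr]; congr 1; exact Int.emod_add_mul_ediv (-j) (n:ℤ)
          _ = Q := hfQ
      have hz := hδ0 r.toNat (Finset.mem_range.mpr (by omega))
      simp only [hδ, Int.toNat_of_nonneg hr0, hfr] at hz
      split_ifs at hz <;> omega
    · have hinv : ((q ^ (-j) : kˣ) : k) * ((q ^ j : kˣ) : k) = 1 := by
        rw [← Units.val_mul, ← zpow_add]
        simp
      have hfQ : f (-j) = -1 := by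
        calc f (-j) = -(((q ^ (-j) : kˣ) : k) * ((q ^ j : kˣ) : k)) := by
              simp only [hf, hj]; ring
          _ = -1 := by rw [hinv]
      set r : ℤ := (-j) % (n:ℤ) with hr
      have hr0 : 0 ≤ r := Int.emod_nonneg _ (by exact_mod_cast hn.ne')
      have hrn : r < n := Int.emod_lt_of_pos _ (by exact_mod_cast hn)
      have hfr : f r = -1 := by
        calc f r = f (r + (n:ℤ) * ((-j) / (n:ℤ))) := (hper r _).symm
          _ = f (-j) := by rw [hr]; congr 1; exact Int.emod_add_mul_ediv (-j) (n:ℤ)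
          _ = -1 := hfQ
      have hz := hδ0 r.toNat (Finset.mem_range.mpr (by omega))
      simp only [hδ, Int.toNat_of_nonneg hr0, hfr, if_pos rfl] at hz
      split_ifs at hz <;> omega

theorem stmt17 (k : Type*) [Field k] [DecidableEq k] (Q : k) (q : kˣ)
    (U : Set k) (hU : U = {x : k | ∃ m : ℤ, x = Q * ((q ^ m : kˣ) : k) ∨
      x = -((q ^ m : kˣ) : k)})
    (Bip : Type*)
    (bfun : Bip → (k →₀ ℕ))               -- the residue function λ ↦ b_λ
    (contains : Bip → Bip → Prop)          -- `contains x y`: diagram of x ⊆ diagram of y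
    (hrefl : ∀ x, contains x x)
    (htrans : ∀ x y z, contains x y → contains y z → contains x z)
    (hsupp : ∀ x : Bip, ↑(bfun x).support ⊆ U)
    -- C is a subcrystal: closed under the Kashiwara operators; in particular, whenever
    -- α_u^∨(b_λ) > 0 (an uncancelled addable box of residue u exists), f̃_u λ ∈ C adds
    -- one box of residue u to the diagram:
    (C : Set Bip)
    (hstep : ∀ x ∈ C, ∀ u ∈ U, 0 < alphaVee Q q (bfun x) u →
      ∃ y ∈ C, contains x y ∧ bfun y = bfun x + Finsupp.single u 1)
    -- b' is a dominant residue function supported on U with b' ≥ b = b_λ pointwise: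
    (b' : k →₀ ℕ) (hb'supp : ↑b'.support ⊆ U)
    (hdom : ∀ u : k, 0 ≤ alphaVee Q q b' u)
    (lam : Bip) (hlam : lam ∈ C)
    (hge : ∀ u : k, bfun lam u ≤ b' u) :
    ∃ mu ∈ C, bfun mu = b' ∧ contains lam mu := by
  classical
  suffices h : ∀ N (x : Bip), x ∈ C → (∀ u, bfun x u ≤ b' u) →
      (b'.sum fun _ n => n) - ((bfun x).sum fun _ n => n) ≤ N →
      ∃ mu ∈ C, bfun mu = b' ∧ contains x mu by
    exact h _ lam hlam hge le_rfl
  intro N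
  induction N with
  | zero =>
    intro x hx hxge hN
    have hbx : bfun x = b' := by
      by_contra hne
      obtain ⟨u, hu⟩ : ∃ u, bfun x u < b' u := by
        by_contra hall
        push_neg at hall
        exact hne (Finsupp.ext fun u => le_antisymm (hxge u) (hall u))
      have := tot_lt (bfun x) b' hxge u hu
      omega
    exact ⟨x, hx, hbx, hrefl x⟩
  | succ N ih =>
    intro x hx hxge hN
    by_cases heq : bfun x = b'
    · exact ⟨x, hx, heq, hrefl x⟩
    · obtain ⟨u, hu⟩ : ∃ u, bfun x u < b' u := by
        by_contra hall
        push_neg at hall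
        exact heq (Finsupp.ext fun u => le_antisymm (hxge u) (hall u))
      obtain ⟨v, hvU, hvlt, hva⟩ := key Q q U hU (bfun x) b' hb'supp hdom hxge ⟨u, hu⟩
      obtain ⟨y, hyC, hxy, hby⟩ := hstep x hx v hvU hva
      have hyge : ∀ w, bfun y w ≤ b' w := by
        intro w
        rw [hby]
        simp only [Finsupp.add_apply, Finsupp.single_apply]
        split_ifs with hw
        · subst hw
          omega
        · have := hxge w
          omega
      have htot : ((bfun y).sum fun _ n => n) = ((bfun x).sum fun _ n => n) + 1 := by
        rw [hby, Finsupp.sum_add_index' (fun _ => rfl) (fun _ _ _ => rfl),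
          Finsupp.sum_single_index rfl]
      have hN' : (b'.sum fun _ n => n) - ((bfun y).sum fun _ n => n) ≤ N := by
        have := tot_lt (bfun x) b' hxge u hu
        omega
      obtain ⟨mu, hmu, hbmu, hcont⟩ := ih y hyC hyge hN'
      exact ⟨mu, hmu, hbmu, htrans _ _ _ hxy hcont⟩
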